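/- For the map C₋, there exists a fixed point whose differential has trace 2cos φ if and only if M₁² = -(4/27)·(M₂ + cos φ - 3)²·(2cos φ - M₂), i.e. M₁² = (4/27)·(M₂ + cos φ - 3)²·(M₂ - 2cos φ). -/

import Mathlib

/-- `C₋` has a fixed point whose differential has trace `2 cos φ` iff
`M₁² = -(4/27)(M₂ + cos φ - 3)²(2 cos φ - M₂)`, i.e.
`M₁² = (4/27)(M₂ + cos φ - 3)²(M₂ - 2 cos φ)`. -/
theorem cubic_henon_minus_elliptic_curve (M₁ M₂ φ : ℝ) (h0 : 0 < φ) (hπ : φ < Real.pi) :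
    ((∃ y₀ : ℝ, -y₀ ^ 3 + (M₂ - 2) * y₀ + M₁ = 0 ∧
        M₂ - 3 * y₀ ^ 2 = 2 * Real.cos φ) ↔
      M₁ ^ 2 = -(4 / 27) * (M₂ + Real.cos φ - 3) ^ 2 * (2 * Real.cos φ - M₂)) ∧
    (-(4 / 27) * (M₂ + Real.cos φ - 3) ^ 2 * (2 * Real.cos φ - M₂)
      = 4 / 27 * (M₂ + Real.cos φ - 3) ^ 2 * (M₂ - 2 * Real.cos φ)) := by
  set c := Real.cos φ with hc
  refine ⟨⟨?_, ?_⟩, by ring⟩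
  · rintro ⟨y, h1, h2⟩
    have hy2 : y ^ 2 = (M₂ - 2 * c) / 3 := by linarith
    have hM1 : M₁ = -(2 / 3) * y * (M₂ + c - 3) := by
      linear_combination h1 + y * hy2
    rw [hM1]
    linear_combination (4 / 9 : ℝ) * (M₂ + c - 3) ^ 2 * hy2
  · intro h
    by_cases hz : M₂ + c - 3 = 0
    · have hc1 : c < 1 := by
        have := Real.cos_lt_cos_of_nonneg_of_le_pi (le_refl 0) (le_of_lt hπ) h0
        simpa using this
      have hs : Real.sqrt (1 - c) ^ 2 = 1 - c := Real.sq_sqrt (by linarith)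
      have hsq : M₁ ^ 2 = 0 := by
        rw [h]; linear_combination (-(4 / 27 : ℝ) * (M₂ + c - 3) * (2 * c - M₂)) * hz
      have hM1 : M₁ = 0 := by
        have := sq_eq_zero_iff.mp hsq
        simpa using this
      have hM2 : M₂ = 3 - c := by linarith
      refine ⟨Real.sqrt (1 - c), ?_, ?_⟩
      · rw [hM1, hM2]
        linear_combination (-Real.sqrt (1 - c)) * hs
      · rw [hM2]; linarith
    · have hd : (2 : ℝ) * (M₂ + c - 3) ≠ 0 := by
        intro h'; exact hz (by linarith)
      set y : ℝ := -3 * M₁ / (2 * (M₂ + c - 3)) with hy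
      have hy2 : y ^ 2 = (M₂ - 2 * c) / 3 := by
        rw [hy, div_pow, div_eq_div_iff (by positivity) (by norm_num)]
        linear_combination 27 * h
      have hM : M₁ = -(2 / 3) * y * (M₂ + c - 3) := by
        rw [hy]; field_simp
      refine ⟨y, ?_, ?_⟩
      · linear_combination hM + (-y) * hy2
      · linear_combination (-3 : ℝ) * hy2
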